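/- Let k_1,...,k_t be positive integers summing to 2K with no subsequence summing to K. For any assignment of linear orders over {p,a,b} to weighted voters with these weights where every voter ranks p last, letting score(a) ≤ score(b) be the Borda scores of a and b, we have score(a) ≤ 3K−1 and score(b) ≤ 4K, and after adding a voter of weight 3K−1 voting p > a > b, p's score 6K−2 is at least the scores of both a and b, so p is a winner. -/

import Mathlib

/-- The three candidates of a 3-candidate election. -/
inductive Cand : Type
  | p | a | b
deriving DecidableEq

instance : Fintype Cand where
  elems := {Cand.p, Cand.a, Cand.b}
  complete := fun x => by cases x <;> simp

/-- Borda points (for weight 1) that the ballot `f` (a ranking: `f c = 0` means top)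
gives to candidate `c`. -/
def pts (f : Cand → Fin 3) (c : Cand) : ℕ := 2 - (f c : ℕ)

/-- The ballot `a > b > p`. -/
def ballotABP : Cand → Fin 3 := fun c => match c with | .a => 0 | .b => 1 | .p => 2

/-- The ballot `b > a > p`. -/
def ballotBAP : Cand → Fin 3 := fun c => match c with | .b => 0 | .a => 1 | .p => 2

/-- The ballot `p > a > b`. -/
def ballotPAB : Cand → Fin 3 := fun c => match c with | .p => 0 | .a => 1 | .b => 2

/-- If the positive weights `k i` sum to `2K` and no subsequence sums to `K`, then for
any assignment of ballots ranking `p` last (`choice i = true` meaning voter `i` votes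
`a > b > p`, else `b > a > p`) with `score a ≤ score b`, we have `score a ≤ 3K - 1`
and `score b ≤ 4K`; and after adding one voter of weight `3K - 1` voting `p > a > b`,
`p`'s score `6K - 2` is at least the score of every candidate, so `p` is a winner. -/
theorem stmt6 (t K : ℕ) (hK : 0 < K) (k : Fin t → ℕ) (hpos : ∀ i, 0 < k i)
    (hsum : ∑ i, k i = 2 * K)
    (hnopart : ¬ ∃ S : Finset (Fin t), ∑ i ∈ S, k i = K)
    (choice : Fin t → Bool)
    (hle : (∑ i, k i * pts (if choice i then ballotABP else ballotBAP) Cand.a) ≤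
           ∑ i, k i * pts (if choice i then ballotABP else ballotBAP) Cand.b) :
    (∑ i, k i * pts (if choice i then ballotABP else ballotBAP) Cand.a) ≤ 3 * K - 1 ∧
    (∑ i, k i * pts (if choice i then ballotABP else ballotBAP) Cand.b) ≤ 4 * K ∧
    (∀ c : Cand,
        (∑ i, k i * pts (if choice i then ballotABP else ballotBAP) c) +
            (3 * K - 1) * pts ballotPAB c ≤
        (∑ i, k i * pts (if choice i then ballotABP else ballotBAP) Cand.p) +
            (3 * K - 1) * pts ballotPAB Cand.p) := by

  classical
  set S : ℕ := ∑ i, (if choice i then k i else 0) with hS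
  set S' : ℕ := ∑ i, (if choice i then 0 else k i) with hS'
  have hSS' : S + S' = 2 * K := by
    rw [hS, hS', ← Finset.sum_add_distrib, ← hsum]
    apply Finset.sum_congr rfl
    intro i _
    cases choice i <;> simp
  have ha : (∑ i, k i * pts (if choice i then ballotABP else ballotBAP) Cand.a)
      = 2 * K + S := by
    rw [hS, ← hsum, ← Finset.sum_add_distrib]
    apply Finset.sum_congr rfl
    intro i _
    cases h : choice i <;> simp [h, pts, ballotABP, ballotBAP] <;> omega
  have hb : (∑ i, k i * pts (if choice i then ballotABP else ballotBAP) Cand.b)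
      = 2 * K + S' := by
    rw [hS', ← hsum, ← Finset.sum_add_distrib]
    apply Finset.sum_congr rfl
    intro i _
    cases h : choice i <;> simp [h, pts, ballotABP, ballotBAP] <;> omega
  have hp : (∑ i, k i * pts (if choice i then ballotABP else ballotBAP) Cand.p) = 0 := by
    apply Finset.sum_eq_zero
    intro i _
    cases h : choice i <;> simp [h, pts, ballotABP, ballotBAP]
  have hSne : S ≠ K := by
    intro h
    exact hnopart ⟨Finset.univ.filter (fun i => choice i = true), by
      rw [Finset.sum_filter, ← h, hS]⟩
  rw [ha, hb] at hle ⊢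
  rw [hp]
  have hSK : S ≤ K - 1 := by omega
  refine ⟨by omega, by omega, ?_⟩
  intro c
  have e1 : pts ballotPAB Cand.p = 2 := rfl
  have e2 : pts ballotPAB Cand.a = 1 := rfl
  have e3 : pts ballotPAB Cand.b = 0 := rfl
  cases c
  · omega
  · rw [e1, e2]; omega
  · rw [e1, e3]; omega
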